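/- Let P : [0,a]×[0,b] → GL(V) be C² in both variables with P(x₀,0) = I for all x₀, and suppose ∂₁P(x) = -A₁(x)P(x) for a C¹ map A₁. Then ∂₁(P(x)⁻¹ ∂₀P(x)) = -P(x)⁻¹ (∂₀A₁)(x) P(x). -/

import Mathlib

set_option maxHeartbeats 1000000
set_option synthInstance.maxHeartbeats 400000


/-- for a C² family `P` of invertible endomorphisms with `P(x₀,0) = I`
satisfying `∂₁P = -A₁ P` for a C¹ map `A₁`, one has
`∂₁(P⁻¹ ∂₀P) = -P⁻¹ (∂₀A₁) P`.  Here `∂₀`, `∂₁` are the partial derivatives in the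
two coordinates, realized via `fderiv` in the directions `(1,0)` and `(0,1)`, and the
pointwise inverse of `P` is given as the map `Pinv`. -/
theorem partial_deriv_conjugated_ODE
    {V : Type*} [NormedAddCommGroup V] [NormedSpace ℝ V] [FiniteDimensional ℝ V]
    (P Pinv A₁ : ℝ × ℝ → V →L[ℝ] V)
    (hP : ContDiff ℝ 2 P)
    (hA₁ : ContDiff ℝ 1 A₁)
    (hinv : ∀ x : ℝ × ℝ, (P x).comp (Pinv x) = 1 ∧ (Pinv x).comp (P x) = 1)
    (hinit : ∀ x₀ : ℝ, P (x₀, 0) = 1)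
    (hODE : ∀ x : ℝ × ℝ, fderiv ℝ P x (0, 1) = -((A₁ x).comp (P x))) :
    ∀ x : ℝ × ℝ,
      fderiv ℝ (fun y : ℝ × ℝ => (Pinv y).comp (fderiv ℝ P y (1, 0))) x (0, 1)
        = -((Pinv x).comp (((fderiv ℝ A₁ x (1, 0))).comp (P x))) := by
  intro x
  have hPd : Differentiable ℝ P := hP.differentiable (by norm_num)
  have hA₁d : Differentiable ℝ A₁ := hA₁.differentiable (by norm_num)
  set D : ℝ × ℝ →L[ℝ] (V →L[ℝ] V) := fderiv ℝ P x with hD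
  set DA : ℝ × ℝ →L[ℝ] (V →L[ℝ] V) := fderiv ℝ A₁ x with hDA
  set D2 : ℝ × ℝ →L[ℝ] (ℝ × ℝ →L[ℝ] (V →L[ℝ] V)) := fderiv ℝ (fderiv ℝ P) x with hD2
  have hPder : HasFDerivAt P D x := (hPd x).hasFDerivAt
  have hAder : HasFDerivAt A₁ DA x := (hA₁d x).hasFDerivAt
  -- the unit associated to `P x`
  set u : (V →L[ℝ] V)ˣ := ⟨P x, Pinv x, (hinv x).1, (hinv x).2⟩ with hu
  have hPinv_eq : Pinv = fun y => Ring.inverse (P y) := by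
    funext y
    have : Ring.inverse ((⟨P y, Pinv y, (hinv y).1, (hinv y).2⟩ : (V →L[ℝ] V)ˣ) :
        V →L[ℝ] V) = Pinv y := Ring.inverse_unit _
    simpa using this.symm
  -- derivative of `Pinv`
  have h1u := hasFDerivAt_ringInverse (𝕜 := ℝ) u
  rw [show (↑u : V →L[ℝ] V) = P x from rfl,
    show (↑u⁻¹ : V →L[ℝ] V) = Pinv x from rfl] at h1u
  have hQder := h1u.comp x hPder
  rw [show (Ring.inverse ∘ P : ℝ × ℝ → V →L[ℝ] V) = Pinv from by
    rw [hPinv_eq]; rfl] at hQder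
  -- `fderiv P` is C¹
  have hF : ContDiff ℝ 1 (fderiv ℝ P) := hP.fderiv_right (by norm_num)
  have hFder : HasFDerivAt (fderiv ℝ P) D2 x := (hF.differentiable (by norm_num) x).hasFDerivAt
  set L : (ℝ × ℝ →L[ℝ] (V →L[ℝ] V)) →L[ℝ] (V →L[ℝ] V) :=
    ContinuousLinearMap.apply ℝ (V →L[ℝ] V) ((1 : ℝ), (0 : ℝ)) with hL
  set L₂ : (ℝ × ℝ →L[ℝ] (V →L[ℝ] V)) →L[ℝ] (V →L[ℝ] V) :=
    ContinuousLinearMap.apply ℝ (V →L[ℝ] V) ((0 : ℝ), (1 : ℝ)) with hL₂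
  have hgder : HasFDerivAt (fun y => fderiv ℝ P y (1, 0)) (L.comp D2) x := by
    exact HasFDerivAt.comp (g := L) x L.hasFDerivAt hFder
  have hg₂der : HasFDerivAt (fun y => fderiv ℝ P y (0, 1)) (L₂.comp D2) x := by
    exact HasFDerivAt.comp (g := L₂) x L₂.hasFDerivAt hFder
  -- second form of derivative of `g₂` via the ODE
  have hg₂der' : HasFDerivAt (fun y => fderiv ℝ P y (0, 1))
      (-(A₁ x • D + DA.smulRight (P x))) x := by
    have : HasFDerivAt (fun y => -(A₁ y * P y)) (-(A₁ x • D + DA.smulRight (P x))) x :=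
      (hAder.mul' hPder).neg
    refine this.congr_of_eventuallyEq (Filter.Eventually.of_forall fun y => ?_)
    show fderiv ℝ P y (0, 1) = -(A₁ y * P y)
    rw [hODE y]; rfl
  have hsecond : L₂.comp D2 = -(A₁ x • D + DA.smulRight (P x)) :=
    hg₂der.unique hg₂der'
  -- symmetry of second derivative
  have hsymm : IsSymmSndFDerivAt ℝ P x := hP.contDiffAt.isSymmSndFDerivAt (by simp)
  have hswap : D2 (0, 1) (1, 0) = D2 (1, 0) (0, 1) := hsymm _ _
  have hswap2 : D2 (1, 0) (0, 1) = -(A₁ x * D (1, 0) + DA (1, 0) * P x) := by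
    have := congrArg (fun T => T ((1 : ℝ), (0 : ℝ))) hsecond
    simpa [L₂, ContinuousLinearMap.smul_apply, smul_eq_mul] using this
  -- product rule for the goal function
  have hprod := hQder.mul' hgder
  have hgoal : fderiv ℝ (fun y : ℝ × ℝ => (Pinv y).comp (fderiv ℝ P y (1, 0))) x
      = Pinv x • (L.comp D2) +
        ((-(ContinuousLinearMap.mulLeftRight ℝ (V →L[ℝ] V) (Pinv x) (Pinv x))).comp
          D).smulRight (fderiv ℝ P x (1, 0)) := hprod.fderiv
  have h1 : P x * Pinv x = 1 := (hinv x).1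
  have h01 : D (0, 1) = -(A₁ x * P x) := hODE x
  rw [hgoal]
  show Pinv x • (D2 (0, 1) (1, 0)) +
      (-(ContinuousLinearMap.mulLeftRight ℝ (V →L[ℝ] V) (Pinv x) (Pinv x)) (D (0, 1)))
        • D (1, 0) = -(Pinv x * (DA (1, 0) * P x))
  rw [hswap, hswap2, h01]
  simp only [ContinuousLinearMap.neg_apply, ContinuousLinearMap.mulLeftRight_apply,
    smul_eq_mul]
  have key : Pinv x * -(A₁ x * P x) * Pinv x = -(Pinv x * A₁ x) := by
    rw [mul_neg, neg_mul, mul_assoc, mul_assoc, h1, mul_one]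
  rw [key]
  noncomm_ring
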